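/- Let m be a positive integer. Given squarefree positive integers a, b, c, d with abcd = m², there exist unique squarefree positive integers g_1, ..., g_6 which are pairwise coprime except possibly for the pair (g_1, g_2), such that a = g_1 g_3 g_4, b = g_1 g_5 g_6, c = g_2 g_3 g_5, d = g_2 g_4 g_6, and abcd = (g_1 g_2 g_3 g_4 g_5 g_6)². Conversely, any squarefree g_1, ..., g_6 pairwise coprime except possibly for (g_1, g_2) with ∏_{i=1}^6 g_i = m yield, via the same formulas, squarefree a, b, c, d with abcd = m². -/

import Mathlib

private lemma gcd_ne_zero' {x y : ℕ} (hx : x ≠ 0) : Nat.gcd x y ≠ 0 :=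
  fun h => hx (Nat.eq_zero_of_gcd_eq_zero_left h)

private lemma cop_of_min {x y : ℕ} (hx : x ≠ 0) (hy : y ≠ 0)
    (h : ∀ p, min (x.factorization p) (y.factorization p) = 0) : Nat.Coprime x y := by
  have : Nat.gcd x y = 1 := by
    refine Nat.eq_of_factorization_eq (gcd_ne_zero' hx) one_ne_zero fun p => ?_
    rw [Nat.factorization_gcd hx hy, Nat.factorization_one]
    simpa [Finsupp.inf_apply] using h p
  exact this

private lemma min_of_cop {x y : ℕ} (hx : x ≠ 0) (hy : y ≠ 0) (h : Nat.Coprime x y)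
    (p : ℕ) : min (x.factorization p) (y.factorization p) = 0 := by
  have h1 : Nat.gcd x y = 1 := h
  have h2 : x.factorization ⊓ y.factorization = 0 := by
    rw [← Nat.factorization_gcd hx hy, h1, Nat.factorization_one]
  have h3 := DFunLike.congr_fun h2 p
  simpa [Finsupp.inf_apply] using h3

private lemma sf_le_one {x : ℕ} (hx : Squarefree x) (p : ℕ) : x.factorization p ≤ 1 :=
  (Nat.squarefree_iff_factorization_le_one hx.ne_zero).mp hx p

private lemma fact_mul3 {x y z : ℕ} (hx : x ≠ 0) (hy : y ≠ 0) (hz : z ≠ 0) (p : ℕ) :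
    (x * y * z).factorization p =
      x.factorization p + y.factorization p + z.factorization p := by
  rw [Nat.factorization_mul (mul_ne_zero hx hy) hz, Nat.factorization_mul hx hy]
  simp [Finsupp.add_apply]

set_option maxHeartbeats 4000000 in
private lemma arith_main (α β γ δ M G1 G2 E G3 G4 G5 G6 : ℕ)
    (hG1 : G1 = min α β) (hG2 : G2 = min γ δ) (hE : E = min G1 G2)
    (hG3 : G3 = min α γ - E) (hG4 : G4 = min α δ - E)
    (hG5 : G5 = min β γ - E) (hG6 : G6 = min β δ - E)
    (b1 : α ≤ 1) (b2 : β ≤ 1) (b3 : γ ≤ 1) (b4 : δ ≤ 1)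
    (hpar : α + β + γ + δ = 2 * M) :
    α = G1 + G3 + G4 ∧ β = G1 + G5 + G6 ∧ γ = G2 + G3 + G5 ∧ δ = G2 + G4 + G6 ∧
    min G1 G3 = 0 ∧ min G1 G4 = 0 ∧ min G1 G5 = 0 ∧ min G1 G6 = 0 ∧
    min G2 G3 = 0 ∧ min G2 G4 = 0 ∧ min G2 G5 = 0 ∧ min G2 G6 = 0 ∧
    min G3 G4 = 0 ∧ min G3 G5 = 0 ∧ min G3 G6 = 0 ∧
    min G4 G5 = 0 ∧ min G4 G6 = 0 ∧ min G5 G6 = 0 := by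
  subst hG1 hG2 hE hG3 hG4 hG5 hG6
  interval_cases α <;> interval_cases β <;> interval_cases γ <;> interval_cases δ <;>
    simp_all <;> omega

set_option maxHeartbeats 4000000 in
private lemma arith_uniq (x1 x2 x3 x4 x5 x6 α β γ δ G1 G2 E G3 G4 G5 G6 : ℕ)
    (n1 : x1 ≤ 1) (n2 : x2 ≤ 1) (n3 : x3 ≤ 1) (n4 : x4 ≤ 1) (n5 : x5 ≤ 1) (n6 : x6 ≤ 1)
    (wA : α = x1 + x3 + x4) (wB : β = x1 + x5 + x6)
    (wC : γ = x2 + x3 + x5) (wD : δ = x2 + x4 + x6)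
    (m13 : min x1 x3 = 0) (m14 : min x1 x4 = 0) (m15 : min x1 x5 = 0)
    (m16 : min x1 x6 = 0) (m23 : min x2 x3 = 0) (m24 : min x2 x4 = 0)
    (m25 : min x2 x5 = 0) (m26 : min x2 x6 = 0) (m34 : min x3 x4 = 0)
    (m35 : min x3 x5 = 0) (m36 : min x3 x6 = 0) (m45 : min x4 x5 = 0)
    (m46 : min x4 x6 = 0) (m56 : min x5 x6 = 0)
    (hG1 : G1 = min α β) (hG2 : G2 = min γ δ) (hE : E = min G1 G2)
    (hG3 : G3 = min α γ - E) (hG4 : G4 = min α δ - E)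
    (hG5 : G5 = min β γ - E) (hG6 : G6 = min β δ - E) :
    x1 = G1 ∧ x2 = G2 ∧ x3 = G3 ∧ x4 = G4 ∧ x5 = G5 ∧ x6 = G6 := by
  subst wA wB wC wD hG1 hG2 hE hG3 hG4 hG5 hG6
  interval_cases x1 <;> interval_cases x2 <;> interval_cases x3 <;>
    interval_cases x4 <;> interval_cases x5 <;> interval_cases x6 <;>
    simp_all

/-- Pairwise coprime except possibly the pair `(g₁, g₂)`, plus squarefreeness. -/
def GoodTuple (g : ℕ × ℕ × ℕ × ℕ × ℕ × ℕ) : Prop :=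
  match g with
  | (g1, g2, g3, g4, g5, g6) =>
    Squarefree g1 ∧ Squarefree g2 ∧ Squarefree g3 ∧ Squarefree g4 ∧
    Squarefree g5 ∧ Squarefree g6 ∧
    Nat.Coprime g1 g3 ∧ Nat.Coprime g1 g4 ∧ Nat.Coprime g1 g5 ∧ Nat.Coprime g1 g6 ∧
    Nat.Coprime g2 g3 ∧ Nat.Coprime g2 g4 ∧ Nat.Coprime g2 g5 ∧ Nat.Coprime g2 g6 ∧
    Nat.Coprime g3 g4 ∧ Nat.Coprime g3 g5 ∧ Nat.Coprime g3 g6 ∧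
    Nat.Coprime g4 g5 ∧ Nat.Coprime g4 g6 ∧ Nat.Coprime g5 g6

set_option maxHeartbeats 1000000 in
/-- **Parametrization of squarefree solutions of `a b c d = m²`.**
Given squarefree `a, b, c, d` with `a * b * c * d = m ^ 2`, there exist unique squarefree
`g₁, …, g₆`, pairwise coprime except possibly for `(g₁, g₂)`, with
`a = g₁ g₃ g₄`, `b = g₁ g₅ g₆`, `c = g₂ g₃ g₅`, `d = g₂ g₄ g₆` and
`a b c d = (g₁ ⋯ g₆)²`. Conversely, any such tuple with `g₁ ⋯ g₆ = m` yields squarefree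
`a, b, c, d` with `a b c d = m²` via the same formulas. -/
theorem squarefree_square_product_parametrization :
    (∀ m a b c d : ℕ, 0 < m →
      Squarefree a → Squarefree b → Squarefree c → Squarefree d →
      a * b * c * d = m ^ 2 →
      ∃! g : ℕ × ℕ × ℕ × ℕ × ℕ × ℕ, GoodTuple g ∧
        a = g.1 * g.2.2.1 * g.2.2.2.1 ∧
        b = g.1 * g.2.2.2.2.1 * g.2.2.2.2.2 ∧
        c = g.2.1 * g.2.2.1 * g.2.2.2.2.1 ∧
        d = g.2.1 * g.2.2.2.1 * g.2.2.2.2.2 ∧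
        a * b * c * d =
          (g.1 * g.2.1 * g.2.2.1 * g.2.2.2.1 * g.2.2.2.2.1 * g.2.2.2.2.2) ^ 2) ∧
    (∀ m : ℕ, ∀ g : ℕ × ℕ × ℕ × ℕ × ℕ × ℕ, GoodTuple g →
      g.1 * g.2.1 * g.2.2.1 * g.2.2.2.1 * g.2.2.2.2.1 * g.2.2.2.2.2 = m →
      Squarefree (g.1 * g.2.2.1 * g.2.2.2.1) ∧
      Squarefree (g.1 * g.2.2.2.2.1 * g.2.2.2.2.2) ∧
      Squarefree (g.2.1 * g.2.2.1 * g.2.2.2.2.1) ∧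
      Squarefree (g.2.1 * g.2.2.2.1 * g.2.2.2.2.2) ∧
      (g.1 * g.2.2.1 * g.2.2.2.1) * (g.1 * g.2.2.2.2.1 * g.2.2.2.2.2) *
        (g.2.1 * g.2.2.1 * g.2.2.2.2.1) * (g.2.1 * g.2.2.2.1 * g.2.2.2.2.2) = m ^ 2) := by
  constructor
  · intro m a b c d hm ha hb hc hd habcd
    have ha0 : a ≠ 0 := ha.ne_zero
    have hb0 : b ≠ 0 := hb.ne_zero
    have hc0 : c ≠ 0 := hc.ne_zero
    have hd0 : d ≠ 0 := hd.ne_zero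
    obtain ⟨g1, hg1⟩ : ∃ g1, g1 = Nat.gcd a b := ⟨_, rfl⟩
    obtain ⟨g2, hg2⟩ : ∃ g2, g2 = Nat.gcd c d := ⟨_, rfl⟩
    obtain ⟨e, hed⟩ : ∃ e, e = Nat.gcd g1 g2 := ⟨_, rfl⟩
    have hea : e ∣ a := hed ▸ (Nat.gcd_dvd_left g1 g2).trans (hg1 ▸ Nat.gcd_dvd_left a b)
    have heb : e ∣ b := hed ▸ (Nat.gcd_dvd_left g1 g2).trans (hg1 ▸ Nat.gcd_dvd_right a b)
    have hec : e ∣ c := hed ▸ (Nat.gcd_dvd_right g1 g2).trans (hg2 ▸ Nat.gcd_dvd_left c d)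
    have hee : e ∣ d := hed ▸ (Nat.gcd_dvd_right g1 g2).trans (hg2 ▸ Nat.gcd_dvd_right c d)
    have heac : e ∣ Nat.gcd a c := Nat.dvd_gcd hea hec
    have head : e ∣ Nat.gcd a d := Nat.dvd_gcd hea hee
    have hebc : e ∣ Nat.gcd b c := Nat.dvd_gcd heb hec
    have hebd : e ∣ Nat.gcd b d := Nat.dvd_gcd heb hee
    obtain ⟨g3, hg3⟩ : ∃ g3, g3 = Nat.gcd a c / e := ⟨_, rfl⟩
    obtain ⟨g4, hg4⟩ : ∃ g4, g4 = Nat.gcd a d / e := ⟨_, rfl⟩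
    obtain ⟨g5, hg5⟩ : ∃ g5, g5 = Nat.gcd b c / e := ⟨_, rfl⟩
    obtain ⟨g6, hg6⟩ : ∃ g6, g6 = Nat.gcd b d / e := ⟨_, rfl⟩
    have hg3e : g3 * e = Nat.gcd a c := by rw [hg3]; exact Nat.div_mul_cancel heac
    have hg4e : g4 * e = Nat.gcd a d := by rw [hg4]; exact Nat.div_mul_cancel head
    have hg5e : g5 * e = Nat.gcd b c := by rw [hg5]; exact Nat.div_mul_cancel hebc
    have hg6e : g6 * e = Nat.gcd b d := by rw [hg6]; exact Nat.div_mul_cancel hebd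
    have hg10 : g1 ≠ 0 := hg1 ▸ gcd_ne_zero' ha0
    have hg20 : g2 ≠ 0 := hg2 ▸ gcd_ne_zero' hc0
    have hg30 : g3 ≠ 0 := fun h =>
      gcd_ne_zero' (x := a) (y := c) ha0 (by rw [← hg3e, h, zero_mul])
    have hg40 : g4 ≠ 0 := fun h =>
      gcd_ne_zero' (x := a) (y := d) ha0 (by rw [← hg4e, h, zero_mul])
    have hg50 : g5 ≠ 0 := fun h =>
      gcd_ne_zero' (x := b) (y := c) hb0 (by rw [← hg5e, h, zero_mul])
    have hg60 : g6 ≠ 0 := fun h =>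
      gcd_ne_zero' (x := b) (y := d) hb0 (by rw [← hg6e, h, zero_mul])
    -- pointwise values of the factorization of the gᵢ
    have GVALS : ∀ p : ℕ,
        g1.factorization p = min (a.factorization p) (b.factorization p) ∧
        g2.factorization p = min (c.factorization p) (d.factorization p) ∧
        e.factorization p = min (g1.factorization p) (g2.factorization p) ∧
        g3.factorization p =
          min (a.factorization p) (c.factorization p) - e.factorization p ∧
        g4.factorization p =
          min (a.factorization p) (d.factorization p) - e.factorization p ∧
        g5.factorization p =
          min (b.factorization p) (c.factorization p) - e.factorization p ∧
        g6.factorization p =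
          min (b.factorization p) (d.factorization p) - e.factorization p := by
      intro p
      refine ⟨?_, ?_, ?_, ?_, ?_, ?_, ?_⟩
      · rw [hg1, Nat.factorization_gcd ha0 hb0]; simp [Finsupp.inf_apply]
      · rw [hg2, Nat.factorization_gcd hc0 hd0]; simp [Finsupp.inf_apply]
      · rw [hed, Nat.factorization_gcd hg10 hg20]; simp [Finsupp.inf_apply]
      · rw [hg3, Nat.factorization_div heac, Finsupp.tsub_apply,
          Nat.factorization_gcd ha0 hc0]
        simp [Finsupp.inf_apply]
      · rw [hg4, Nat.factorization_div head, Finsupp.tsub_apply,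
          Nat.factorization_gcd ha0 hd0]
        simp [Finsupp.inf_apply]
      · rw [hg5, Nat.factorization_div hebc, Finsupp.tsub_apply,
          Nat.factorization_gcd hb0 hc0]
        simp [Finsupp.inf_apply]
      · rw [hg6, Nat.factorization_div hebd, Finsupp.tsub_apply,
          Nat.factorization_gcd hb0 hd0]
        simp [Finsupp.inf_apply]
    have PAR : ∀ p : ℕ, a.factorization p + b.factorization p + c.factorization p +
        d.factorization p = 2 * m.factorization p := by
      intro p
      have h := congrArg (fun n : ℕ => n.factorization p) habcd
      rw [Nat.factorization_mul (mul_ne_zero (mul_ne_zero ha0 hb0) hc0) hd0,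
        Nat.factorization_mul (mul_ne_zero ha0 hb0) hc0,
        Nat.factorization_mul ha0 hb0, Nat.factorization_pow] at h
      simpa [Finsupp.add_apply, Finsupp.smul_apply, two_mul] using h
    have MASTER : ∀ p : ℕ,
        a.factorization p = g1.factorization p + g3.factorization p + g4.factorization p ∧
        b.factorization p = g1.factorization p + g5.factorization p + g6.factorization p ∧
        c.factorization p = g2.factorization p + g3.factorization p + g5.factorization p ∧
        d.factorization p = g2.factorization p + g4.factorization p + g6.factorization p ∧
        min (g1.factorization p) (g3.factorization p) = 0 ∧
        min (g1.factorization p) (g4.factorization p) = 0 ∧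
        min (g1.factorization p) (g5.factorization p) = 0 ∧
        min (g1.factorization p) (g6.factorization p) = 0 ∧
        min (g2.factorization p) (g3.factorization p) = 0 ∧
        min (g2.factorization p) (g4.factorization p) = 0 ∧
        min (g2.factorization p) (g5.factorization p) = 0 ∧
        min (g2.factorization p) (g6.factorization p) = 0 ∧
        min (g3.factorization p) (g4.factorization p) = 0 ∧
        min (g3.factorization p) (g5.factorization p) = 0 ∧
        min (g3.factorization p) (g6.factorization p) = 0 ∧
        min (g4.factorization p) (g5.factorization p) = 0 ∧
        min (g4.factorization p) (g6.factorization p) = 0 ∧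
        min (g5.factorization p) (g6.factorization p) = 0 := by
      intro p
      obtain ⟨f1, f2, fe, f3, f4, f5, f6⟩ := GVALS p
      exact arith_main _ _ _ _ _ _ _ _ _ _ _ _ f1 f2 fe f3 f4 f5 f6
        (sf_le_one ha p) (sf_le_one hb p) (sf_le_one hc p) (sf_le_one hd p) (PAR p)
    have hA : a = g1 * g3 * g4 :=
      Nat.eq_of_factorization_eq ha0
        (mul_ne_zero (mul_ne_zero hg10 hg30) hg40) fun p => by
          rw [fact_mul3 hg10 hg30 hg40]; exact (MASTER p).1
    have hB : b = g1 * g5 * g6 :=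
      Nat.eq_of_factorization_eq hb0
        (mul_ne_zero (mul_ne_zero hg10 hg50) hg60) fun p => by
          rw [fact_mul3 hg10 hg50 hg60]; exact (MASTER p).2.1
    have hC : c = g2 * g3 * g5 :=
      Nat.eq_of_factorization_eq hc0
        (mul_ne_zero (mul_ne_zero hg20 hg30) hg50) fun p => by
          rw [fact_mul3 hg20 hg30 hg50]; exact (MASTER p).2.2.1
    have hD : d = g2 * g4 * g6 :=
      Nat.eq_of_factorization_eq hd0
        (mul_ne_zero (mul_ne_zero hg20 hg40) hg60) fun p => by
          rw [fact_mul3 hg20 hg40 hg60]; exact (MASTER p).2.2.2.1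
    have hg1sq : Squarefree g1 := ha.squarefree_of_dvd (hg1 ▸ Nat.gcd_dvd_left a b)
    have hg2sq : Squarefree g2 := hc.squarefree_of_dvd (hg2 ▸ Nat.gcd_dvd_left c d)
    have hg3sq : Squarefree g3 :=
      ha.squarefree_of_dvd ((Dvd.intro e hg3e).trans (Nat.gcd_dvd_left a c))
    have hg4sq : Squarefree g4 :=
      ha.squarefree_of_dvd ((Dvd.intro e hg4e).trans (Nat.gcd_dvd_left a d))
    have hg5sq : Squarefree g5 :=
      hb.squarefree_of_dvd ((Dvd.intro e hg5e).trans (Nat.gcd_dvd_left b c))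
    have hg6sq : Squarefree g6 :=
      hb.squarefree_of_dvd ((Dvd.intro e hg6e).trans (Nat.gcd_dvd_left b d))
    have c13 : Nat.Coprime g1 g3 :=
      cop_of_min hg10 hg30 fun p => (MASTER p).2.2.2.2.1
    have c14 : Nat.Coprime g1 g4 :=
      cop_of_min hg10 hg40 fun p => (MASTER p).2.2.2.2.2.1
    have c15 : Nat.Coprime g1 g5 :=
      cop_of_min hg10 hg50 fun p => (MASTER p).2.2.2.2.2.2.1
    have c16 : Nat.Coprime g1 g6 :=
      cop_of_min hg10 hg60 fun p => (MASTER p).2.2.2.2.2.2.2.1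
    have c23 : Nat.Coprime g2 g3 :=
      cop_of_min hg20 hg30 fun p => (MASTER p).2.2.2.2.2.2.2.2.1
    have c24 : Nat.Coprime g2 g4 :=
      cop_of_min hg20 hg40 fun p => (MASTER p).2.2.2.2.2.2.2.2.2.1
    have c25 : Nat.Coprime g2 g5 :=
      cop_of_min hg20 hg50 fun p => (MASTER p).2.2.2.2.2.2.2.2.2.2.1
    have c26 : Nat.Coprime g2 g6 :=
      cop_of_min hg20 hg60 fun p => (MASTER p).2.2.2.2.2.2.2.2.2.2.2.1
    have c34 : Nat.Coprime g3 g4 :=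
      cop_of_min hg30 hg40 fun p => (MASTER p).2.2.2.2.2.2.2.2.2.2.2.2.1
    have c35 : Nat.Coprime g3 g5 :=
      cop_of_min hg30 hg50 fun p => (MASTER p).2.2.2.2.2.2.2.2.2.2.2.2.2.1
    have c36 : Nat.Coprime g3 g6 :=
      cop_of_min hg30 hg60 fun p => (MASTER p).2.2.2.2.2.2.2.2.2.2.2.2.2.2.1
    have c45 : Nat.Coprime g4 g5 :=
      cop_of_min hg40 hg50 fun p => (MASTER p).2.2.2.2.2.2.2.2.2.2.2.2.2.2.2.1
    have c46 : Nat.Coprime g4 g6 :=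
      cop_of_min hg40 hg60 fun p => (MASTER p).2.2.2.2.2.2.2.2.2.2.2.2.2.2.2.2.1
    have c56 : Nat.Coprime g5 g6 :=
      cop_of_min hg50 hg60 fun p => (MASTER p).2.2.2.2.2.2.2.2.2.2.2.2.2.2.2.2.2
    refine ⟨(g1, g2, g3, g4, g5, g6),
      ⟨⟨hg1sq, hg2sq, hg3sq, hg4sq, hg5sq, hg6sq, c13, c14, c15, c16,
        c23, c24, c25, c26, c34, c35, c36, c45, c46, c56⟩,
        hA, hB, hC, hD, by rw [hA, hB, hC, hD]; ring⟩, ?_⟩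
    rintro ⟨h1, h2, h3, h4, h5, h6⟩
      ⟨⟨s1, s2, s3, s4, s5, s6, d13, d14, d15, d16, d23, d24, d25, d26,
        d34, d35, d36, d45, d46, d56⟩, eA, eB, eC, eD, -⟩
    simp only at eA eB eC eD
    have h10 : h1 ≠ 0 := s1.ne_zero
    have h20 : h2 ≠ 0 := s2.ne_zero
    have h30 : h3 ≠ 0 := s3.ne_zero
    have h40 : h4 ≠ 0 := s4.ne_zero
    have h50 : h5 ≠ 0 := s5.ne_zero
    have h60 : h6 ≠ 0 := s6.ne_zero
    have HMASTER : ∀ p : ℕ,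
        h1.factorization p = g1.factorization p ∧
        h2.factorization p = g2.factorization p ∧
        h3.factorization p = g3.factorization p ∧
        h4.factorization p = g4.factorization p ∧
        h5.factorization p = g5.factorization p ∧
        h6.factorization p = g6.factorization p := by
      intro p
      obtain ⟨f1, f2, fe, f3, f4, f5, f6⟩ := GVALS p
      have wA : a.factorization p =
          h1.factorization p + h3.factorization p + h4.factorization p := by
        rw [eA, fact_mul3 h10 h30 h40]
      have wB : b.factorization p =
          h1.factorization p + h5.factorization p + h6.factorization p := by
        rw [eB, fact_mul3 h10 h50 h60]
      have wC : c.factorization p =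
          h2.factorization p + h3.factorization p + h5.factorization p := by
        rw [eC, fact_mul3 h20 h30 h50]
      have wD : d.factorization p =
          h2.factorization p + h4.factorization p + h6.factorization p := by
        rw [eD, fact_mul3 h20 h40 h60]
      exact arith_uniq _ _ _ _ _ _ _ _ _ _ _ _ _ _ _ _ _
        (sf_le_one s1 p) (sf_le_one s2 p) (sf_le_one s3 p)
        (sf_le_one s4 p) (sf_le_one s5 p) (sf_le_one s6 p) wA wB wC wD
        (min_of_cop h10 h30 d13 p) (min_of_cop h10 h40 d14 p)
        (min_of_cop h10 h50 d15 p) (min_of_cop h10 h60 d16 p)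
        (min_of_cop h20 h30 d23 p) (min_of_cop h20 h40 d24 p)
        (min_of_cop h20 h50 d25 p) (min_of_cop h20 h60 d26 p)
        (min_of_cop h30 h40 d34 p) (min_of_cop h30 h50 d35 p)
        (min_of_cop h30 h60 d36 p) (min_of_cop h40 h50 d45 p)
        (min_of_cop h40 h60 d46 p) (min_of_cop h50 h60 d56 p)
        f1 f2 fe f3 f4 f5 f6
    have E1 : h1 = g1 :=
      Nat.eq_of_factorization_eq h10 hg10 fun p => (HMASTER p).1
    have E2 : h2 = g2 :=
      Nat.eq_of_factorization_eq h20 hg20 fun p => (HMASTER p).2.1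
    have E3 : h3 = g3 :=
      Nat.eq_of_factorization_eq h30 hg30 fun p => (HMASTER p).2.2.1
    have E4 : h4 = g4 :=
      Nat.eq_of_factorization_eq h40 hg40 fun p => (HMASTER p).2.2.2.1
    have E5 : h5 = g5 :=
      Nat.eq_of_factorization_eq h50 hg50 fun p => (HMASTER p).2.2.2.2.1
    have E6 : h6 = g6 :=
      Nat.eq_of_factorization_eq h60 hg60 fun p => (HMASTER p).2.2.2.2.2
    simp only [Prod.mk.injEq]
    exact ⟨E1, E2, E3, E4, E5, E6⟩
  · rintro m ⟨g1, g2, g3, g4, g5, g6⟩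
      ⟨s1, s2, s3, s4, s5, s6, c13, c14, c15, c16, c23, c24, c25, c26,
        c34, c35, c36, c45, c46, c56⟩ hprod
    simp only at hprod ⊢
    refine ⟨?_, ?_, ?_, ?_, ?_⟩
    · exact (Nat.squarefree_mul (Nat.Coprime.mul c14 c34)).mpr
        ⟨(Nat.squarefree_mul c13).mpr ⟨s1, s3⟩, s4⟩
    · exact (Nat.squarefree_mul (Nat.Coprime.mul c16 c56)).mpr
        ⟨(Nat.squarefree_mul c15).mpr ⟨s1, s5⟩, s6⟩
    · exact (Nat.squarefree_mul (Nat.Coprime.mul c25 c35)).mpr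
        ⟨(Nat.squarefree_mul c23).mpr ⟨s2, s3⟩, s5⟩
    · exact (Nat.squarefree_mul (Nat.Coprime.mul c26 c46)).mpr
        ⟨(Nat.squarefree_mul c24).mpr ⟨s2, s4⟩, s6⟩
    · rw [← hprod]; ring
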